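/- Let q be an odd prime, set c = !![1, 0; 1, 1] in SL₂(ZMod q), and let n be a natural number not divisible by q. Then c^n is conjugate to c in SL₂(ZMod q) if and only if the image of n in ZMod q is a square in ZMod q. -/

import Mathlib

theorem pow_conj_iff_isSquare (q : ℕ) [Fact (Nat.Prime q)] (hq : Odd q)
    (c : Matrix.SpecialLinearGroup (Fin 2) (ZMod q))
    (hc : (c : Matrix (Fin 2) (Fin 2) (ZMod q)) = !![1, 0; 1, 1])
    (n : ℕ) (hn : ¬ q ∣ n) :
    IsConj (c ^ n) c ↔ IsSquare ((n : ZMod q)) := by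
  have hn0 : (n : ZMod q) ≠ 0 := by
    simpa [ZMod.natCast_eq_zero_iff] using hn
  have hpow : ∀ m : ℕ, ((c ^ m : Matrix.SpecialLinearGroup (Fin 2) (ZMod q)) :
      Matrix (Fin 2) (Fin 2) (ZMod q)) = !![1, 0; (m : ZMod q), 1] := by
    intro m
    induction m with
    | zero => simp [Matrix.one_fin_two]
    | succ k ih =>
      rw [pow_succ, Matrix.SpecialLinearGroup.coe_mul, ih, hc]
      push_cast
      simp [Matrix.mul_fin_two]
  rw [isConj_iff]
  constructor
  · rintro ⟨g, hg⟩
    have hg' : g * c ^ n = c * g := mul_inv_eq_iff_eq_mul.mp hg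
    have hmat : (g : Matrix (Fin 2) (Fin 2) (ZMod q)) * !![1, 0; (n : ZMod q), 1]
        = !![1, 0; 1, 1] * (g : Matrix (Fin 2) (Fin 2) (ZMod q)) := by
      have := congrArg (Subtype.val) hg'
      simpa [Matrix.SpecialLinearGroup.coe_mul, hpow, hc] using this
    set a := (g : Matrix (Fin 2) (Fin 2) (ZMod q)) 0 0 with ha
    set b := (g : Matrix (Fin 2) (Fin 2) (ZMod q)) 0 1 with hb
    set c' := (g : Matrix (Fin 2) (Fin 2) (ZMod q)) 1 0 with hc'
    set d := (g : Matrix (Fin 2) (Fin 2) (ZMod q)) 1 1 with hd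
    have e00 : a * 1 + b * (n : ZMod q) = 1 * a + 0 * c' := by
      have := congrFun (congrFun hmat 0) 0
      simpa [Matrix.mul_apply, Fin.sum_univ_two] using this
    have e10 : c' * 1 + d * (n : ZMod q) = 1 * a + 1 * c' := by
      have := congrFun (congrFun hmat 1) 0
      simpa [Matrix.mul_apply, Fin.sum_univ_two] using this
    have hb0 : b = 0 := by
      have : b * (n : ZMod q) = 0 := by linear_combination e00
      exact (mul_eq_zero.mp this).resolve_right hn0
    have hda : d * (n : ZMod q) = a := by linear_combination e10
    have hdet : a * d - b * c' = 1 := by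
      have := g.prop
      rwa [Matrix.det_fin_two] at this
    have key : (n : ZMod q) * (d * d) = 1 := by
      rw [hb0] at hdet
      linear_combination d * hda + hdet
    have hd0 : d ≠ 0 := by
      intro h; rw [h] at key; simp at key
    refine ⟨d⁻¹, ?_⟩
    field_simp
    linear_combination key
  · rintro ⟨s, hs⟩
    have hs0 : s ≠ 0 := by rintro rfl; simp [hs] at hn0
    have hdet : Matrix.det !![s, 0; 0, s⁻¹] = 1 := by
      rw [Matrix.det_fin_two_of]; field_simp; ring
    refine ⟨⟨!![s, 0; 0, s⁻¹], hdet⟩, ?_⟩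
    refine mul_inv_eq_iff_eq_mul.mpr ?_
    apply Subtype.coe_injective
    simp only [Matrix.SpecialLinearGroup.coe_mul, hpow, hc]
    have hsn : s⁻¹ * (n : ZMod q) = s := by
      field_simp
      linear_combination hs
    change !![s, 0; 0, s⁻¹] * ((c ^ n : Matrix.SpecialLinearGroup (Fin 2) (ZMod q)) : Matrix (Fin 2) (Fin 2) (ZMod q)) = (c : Matrix (Fin 2) (Fin 2) (ZMod q)) * !![s, 0; 0, s⁻¹]
    rw [hpow, hc]
    simp [Matrix.mul_fin_two, hsn]
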